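/- Let D = F_q \ {β_1,...,β_l} with |D| > k, and fix i with 1 ≤ i ≤ l. The word u = (1/(α - β_i))_{α ∈ D} is a deep hole of RS_q(D,k), i.e., d(u, RS_q(D,k)) = |D| - k. -/

import Mathlib

/-- Error distance of a word `u` to a code `C`. -/
noncomputable def errDist {ι F : Type*} [Fintype ι] [DecidableEq F]
    (u : ι → F) (C : Set (ι → F)) : ℕ :=
  sInf ((fun c => hammingDist u c) '' C)

/-- The Reed-Solomon code with evaluation set `D` and dimension `k`. -/
noncomputable def RSCode {F : Type*} [Field F] (D : Finset F) (k : ℕ) : Set (D → F) :=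
  {v | ∃ f : Polynomial F, f.degree < k ∧ ∀ α : D, v α = f.eval (α : F)}

open Polynomial Finset in
/-- At most `k` agreements between `u` and an evaluation of a polynomial of degree < k. -/
lemma agree_card_le {F : Type*} [Field F] [DecidableEq F] (D : Finset F) (k : ℕ) (β : F)
    (hβD : ∀ α : F, α ∈ D → α ≠ β) (f : Polynomial F) (hf : f.degree < k) :
    (Finset.univ.filter (fun α : D => ((α : F) - β)⁻¹ = f.eval (α : F))).card ≤ k := by
  set g : F[X] := (X - C β) * f - 1 with hg
  have hgβ : g.eval β = -1 := by simp [hg]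
  have hgne : g ≠ 0 := fun h => by simp [h] at hgβ
  have hdeg : g.natDegree ≤ k := by
    rcases eq_or_ne f 0 with rfl | hf0
    · simp [hg]
    · have h1 : f.natDegree < k := natDegree_lt_iff_degree_lt hf0 |>.mpr (by simpa using hf)
      calc g.natDegree ≤ max ((X - C β) * f).natDegree (1 : F[X]).natDegree :=
            natDegree_sub_le _ _
        _ ≤ k := by
            refine max_le ?_ (by simp)
            calc ((X - C β) * f).natDegree ≤ (X - C β).natDegree + f.natDegree :=
                  natDegree_mul_le
              _ ≤ 1 + f.natDegree := by simp
              _ ≤ k := by omega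
  have hsub : ∀ α : D, ((α : F) - β)⁻¹ = f.eval (α : F) → (α : F) ∈ g.roots.toFinset := by
    intro α hα
    have hne : (α : F) - β ≠ 0 := sub_ne_zero_of_ne (hβD _ α.2)
    have hz : g.eval (α : F) = 0 := by
      simp only [hg, eval_sub, eval_mul, eval_X, eval_C, eval_one, ← hα]
      field_simp
      exact sub_self 1
    simp [Multiset.mem_toFinset, mem_roots hgne, hz, IsRoot]
  calc (Finset.univ.filter (fun α : D => ((α : F) - β)⁻¹ = f.eval (α : F))).card
      ≤ g.roots.toFinset.card :=
        Finset.card_le_card_of_injOn (fun α => (α : F))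
          (fun α hα => hsub α (Finset.mem_filter.mp hα).2)
          (fun a _ b _ h => Subtype.ext h)
    _ ≤ Multiset.card g.roots := Multiset.toFinset_card_le _
    _ ≤ g.natDegree := card_roots' g
    _ ≤ k := hdeg

theorem stmt3 {F : Type*} [Field F] [Fintype F] [DecidableEq F]
    (k : ℕ) (B D : Finset F) (hD : D = Finset.univ \ B) (hk : k < D.card)
    (β : F) (hβ : β ∈ B) :
    errDist (fun α : D => ((α : F) - β)⁻¹) (RSCode D k) = D.card - k := by
  classical
  have hβD : ∀ α : F, α ∈ D → α ≠ β := by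
    intro α hα
    rw [hD, Finset.mem_sdiff] at hα
    rintro rfl; exact hα.2 hβ
  -- lower bound: every element of the image is ≥ D.card - k
  have hsplit : ∀ c : D → F,
      hammingDist (fun α : D => ((α : F) - β)⁻¹) c +
      (Finset.univ.filter (fun α : D => ((α : F) - β)⁻¹ = c α)).card = D.card := by
    intro c
    have h1 := Finset.card_filter_add_card_filter_not
      (s := (Finset.univ : Finset D)) (p := fun α : D => ((α : F) - β)⁻¹ = c α)
    have h2 : hammingDist (fun α : D => ((α : F) - β)⁻¹) c =
        (Finset.univ.filter (fun α : D => ¬ ((α : F) - β)⁻¹ = c α)).card := by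
      simp only [hammingDist, ne_eq]
    rw [h2]
    rw [← Fintype.card_coe D, ← Finset.card_univ]
    omega
  have hlb : ∀ n ∈ ((fun c => hammingDist (fun α : D => ((α : F) - β)⁻¹) c) '' (RSCode D k)),
      D.card - k ≤ n := by
    rintro n ⟨c, ⟨f, hfdeg, hfeval⟩, rfl⟩
    dsimp only
    have hagree : (Finset.univ.filter (fun α : D => ((α : F) - β)⁻¹ = c α)).card ≤ k := by
      refine le_trans (le_of_eq ?_) (agree_card_le D k β hβD f hfdeg)
      congr 1; ext α; simp [hfeval α]
    have := hsplit c
    omega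
  -- upper bound: construct a codeword at distance D.card - k
  obtain ⟨S, hSD, hScard⟩ := Finset.exists_subset_card_eq (s := D) (n := k) (le_of_lt hk)
  set f : Polynomial F := Lagrange.interpolate S id (fun x => (x - β)⁻¹) with hf
  have hinj : Set.InjOn (id : F → F) S := Function.injective_id.injOn
  have hfdeg : f.degree < k := by
    have := Lagrange.degree_interpolate_lt (fun x => (x - β)⁻¹) hinj
    rwa [hScard] at this
  set c : D → F := fun α : D => f.eval (α : F) with hc
  have hcmem : c ∈ RSCode D k := ⟨f, hfdeg, fun α => rfl⟩
  have hagree_ge : k ≤ (Finset.univ.filter (fun α : D => ((α : F) - β)⁻¹ = c α)).card := by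
    rw [← hScard]
    obtain ⟨d0, hd0⟩ : D.Nonempty := Finset.card_pos.mp (lt_of_le_of_lt (Nat.zero_le k) hk)
    refine Finset.card_le_card_of_injOn (fun α => if h : α ∈ S then (⟨α, hSD h⟩ : D)
      else ⟨d0, hd0⟩) ?_ ?_
    · intro α hα
      simp only [Finset.mem_coe] at hα ⊢
      simp only [hα, dif_pos, Finset.mem_filter, Finset.mem_univ, true_and]
      have := Lagrange.eval_interpolate_at_node (fun x => (x - β)⁻¹) hinj hα
      simp only [hc, hf, id] at this ⊢
      rw [this]
    · intro a ha b hb hab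
      simp only [Finset.mem_coe] at ha hb
      simp only [ha, hb, dif_pos] at hab
      exact congrArg Subtype.val hab
  have hagree_le : (Finset.univ.filter (fun α : D => ((α : F) - β)⁻¹ = c α)).card ≤ k := by
    refine le_trans (le_of_eq ?_) (agree_card_le D k β hβD f hfdeg)
    congr 1
  have hmem : (D.card - k) ∈
      ((fun c => hammingDist (fun α : D => ((α : F) - β)⁻¹) c) '' (RSCode D k)) := by
    refine ⟨c, hcmem, ?_⟩
    dsimp only
    have := hsplit c
    omega
  exact le_antisymm (Nat.sInf_le hmem) (hlb _ (Nat.sInf_mem ⟨_, hmem⟩))
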